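/- No principal eigenvalue for β > 1/2: let β ∈ (1/2,1). Then there is no λ > 0 admitting a bounded nonnegative u ≢ 0 with -Δ_β u = λ u on T_m and u → 0 along every branch. -/

import Mathlib

open Filter Finset Topology

/-- The weight `p_β`: `1` if `β = 0`, and `β/(1-β)` otherwise. -/
noncomputable def pB (β : ℝ) : ℝ := if β = 0 then 1 else β / (1 - β)

/-- Vertices of the regular `m`-branching tree are finite sequences over `Fin m`
(the root is `[]`, the successors of `x` are `i :: x`, the predecessor of `a :: t` is `t`,
and the level `|x|` is the list length).  The `β`-Laplacian on the tree. -/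
noncomputable def lapB (m : ℕ) (β : ℝ) (u : List (Fin m) → ℝ) : List (Fin m) → ℝ
  | [] => (∑ i : Fin m, u [i]) / m - u []
  | a :: t =>
      (β * u t + (1 - β) * (∑ i : Fin m, u (i :: a :: t)) / m - u (a :: t)) *
        pB β ^ (-((a :: t).length : ℤ))

/-- A branch: an infinite path starting at the root, following successors. -/
def IsBranch (m : ℕ) (b : ℕ → List (Fin m)) : Prop :=
  b 0 = [] ∧ ∀ n, ∃ i : Fin m, b (n + 1) = i :: b n

/-- Homogeneous Dirichlet boundary condition: `u → 0` along every branch. -/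
def ZeroOnBoundary (m : ℕ) (u : List (Fin m) → ℝ) : Prop :=
  ∀ b : ℕ → List (Fin m), IsBranch m b → Tendsto (fun n => u (b n)) atTop (𝓝 0)

/-- `lam` is a principal eigenvalue of `Δ_β`: it is positive and admits a bounded
nonnegative nontrivial eigenfunction vanishing on the boundary. -/
def IsPrincipalEigenvalue (m : ℕ) (β lam : ℝ) : Prop :=
  0 < lam ∧ ∃ u : List (Fin m) → ℝ,
    (∃ M, ∀ x, |u x| ≤ M) ∧ (∀ x, 0 ≤ u x) ∧ u ≠ 0 ∧
    (∀ x, -lapB m β u x = lam * u x) ∧ ZeroOnBoundary m u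

/-- Membership in the set `A_β`. -/
def memA (m : ℕ) (β lam : ℝ) : Prop :=
  0 < lam ∧ ∃ v : List (Fin m) → ℝ, ∃ c C : ℝ, 0 < c ∧
    (∀ x, c < v x ∧ v x < C) ∧ ∀ x, lapB m β v x + lam * v x ≤ 0

/-- `λ₁(β) = sup A_β`. -/
noncomputable def lam1 (m : ℕ) (β : ℝ) : ℝ := sSup {lam | memA m β lam}

theorem stmt8 (m : ℕ) (hm : 2 ≤ m) (β : ℝ) (hβ0 : 1 / 2 < β) (hβ1 : β < 1) :
    ¬ ∃ lam : ℝ, IsPrincipalEigenvalue m β lam := by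
  rintro ⟨lam, hlam, u, ⟨M, hM⟩, hnn, hne, heig, hbd⟩
  have hβpos : 0 < β := by linarith
  have hβ1' : 0 < 1 - β := by linarith
  have hmpos : (0:ℝ) < m := by
    have : (2:ℝ) ≤ m := by exact_mod_cast hm
    linarith
  have hβne : β ≠ 0 := ne_of_gt hβpos
  have hpval : pB β = β / (1 - β) := by simp [pB, hβne]
  have hp1 : 1 < pB β := by
    rw [hpval, lt_div_iff₀ hβ1']; linarith
  have hp0 : (0:ℝ) < pB β := lt_trans one_pos hp1
  -- the key rearranged eigenfunction equation at non-root vertices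
  have key : ∀ (a : Fin m) (t : List (Fin m)),
      β * u t + (1 - β) * (∑ i : Fin m, u (i :: a :: t)) / m
        = u (a :: t) * (1 - lam * pB β ^ (a :: t).length) := by
    intro a t
    have h := heig (a :: t)
    simp only [lapB] at h
    rw [zpow_neg, zpow_natCast] at h
    have hpne : pB β ^ (a :: t).length ≠ 0 := pow_ne_zero _ (ne_of_gt hp0)
    have h2 := congrArg (fun z => z * pB β ^ (a :: t).length) h
    simp only [neg_mul, mul_assoc, inv_mul_cancel₀ hpne, mul_one] at h2
    ring_nf
    ring_nf at h2
    linarith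
  have hSnn : ∀ x : List (Fin m), 0 ≤ ∑ i : Fin m, u (i :: x) :=
    fun x => Finset.sum_nonneg fun i _ => hnn _
  -- choose a deep level N ≥ 1 below which u must vanish
  obtain ⟨N₀, hN₀⟩ := pow_unbounded_of_one_lt (1 / lam) hp1
  set N := N₀ + 1 with hN
  have hdeep : ∀ (a : Fin m) (t : List (Fin m)), N ≤ (a :: t).length → u (a :: t) = 0 := by
    intro a t hLen
    have hbig : 1 < lam * pB β ^ (a :: t).length := by
      have h1 : pB β ^ N₀ ≤ pB β ^ (a :: t).length :=
        pow_le_pow_right₀ (le_of_lt hp1) (by omega)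
      have : 1 / lam < pB β ^ (a :: t).length := lt_of_lt_of_le hN₀ h1
      rw [div_lt_iff₀ hlam] at this
      linarith [mul_comm lam (pB β ^ (a :: t).length)]
    have hk := key a t
    have hL : 0 ≤ β * u t + (1 - β) * (∑ i : Fin m, u (i :: a :: t)) / m := by
      have := hSnn (a :: t)
      have := hnn t
      positivity
    have hux := hnn (a :: t)
    nlinarith
  -- backwards propagation: u vanishes everywhere
  have hzero : ∀ n : ℕ, ∀ x : List (Fin m), N ≤ x.length + n → u x = 0 := by
    intro n
    induction n with
    | zero =>
      intro x hx
      cases x with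
      | nil => simp [hN] at hx
      | cons a t => exact hdeep a t (by simpa using hx)
    | succ n ih =>
      intro x hx
      by_cases hc : N ≤ x.length + n
      · exact ih x hc
      · have hmn : 0 < m := by omega
        set i0 : Fin m := ⟨0, hmn⟩
        have hy : u (i0 :: x) = 0 := ih (i0 :: x) (by simp; omega)
        have hchild : ∀ i : Fin m, u (i :: i0 :: x) = 0 := fun i =>
          ih (i :: i0 :: x) (by simp; omega)
        have hk := key i0 x
        rw [hy] at hk
        have hS : (∑ i : Fin m, u (i :: i0 :: x)) = 0 :=
          Finset.sum_eq_zero fun i _ => hchild i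
        rw [hS] at hk
        have : β * u x = 0 := by
          have := hk
          field_simp at this
          have h0 : β * u x * ↑m = 0 := by linarith
          exact (mul_eq_zero.mp h0).resolve_right (ne_of_gt hmpos)
        have := mul_eq_zero.mp this
        rcases this with h | h
        · exact absurd h hβne
        · exact h
  apply hne
  funext x
  exact hzero N x (by omega)
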